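/- Let ϕ = χ_{A_N} with A_N = ⋃_{j=0}^{N−1} [2j/N, (2j+1)/N). Then ϕ satisfies the refinement relation χ_{A_N}(t/(2N)) = Σ_{j=0}^{N−1} [χ_{A_N}(t − 4j) + χ_{A_N}(t − 1/N − 4j)] for almost every t ∈ ℝ; equivalently, in the Fourier domain ϕ̂(2Nξ) = (1/(2N))(1 + e^{−2πiξ/N}) (Σ_{j=0}^{N−1} e^{−8πijξ}) ϕ̂(ξ). -/

import Mathlib

open MeasureTheory Complex Real ComplexConjugate

noncomputable section

/-- The set A_N = ⋃_{j=0}^{N−1} [2j/N, (2j+1)/N). -/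
def haarSet (N : ℕ) : Set ℝ :=
  ⋃ j ∈ Finset.range N, Set.Ico ((2 * j : ℝ) / N) ((2 * j + 1 : ℝ) / N)

/-- The nonuniform Haar scaling function ϕ = χ_{A_N}. -/
def haarScaling (N : ℕ) : ℝ → ℂ := Set.indicator (haarSet N) (fun _ => (1 : ℂ))

/-- Indicator of `[a, b)` as a complex-valued function. -/
def Ind (a b : ℝ) : ℝ → ℂ := (Set.Ico a b).indicator (fun _ => (1 : ℂ))

lemma Ind_congr {a b a' b' : ℝ} (t : ℝ) (h1 : a = a') (h2 : b = b') :
    Ind a b t = Ind a' b' t := by rw [h1, h2]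

lemma Ind_split {a c b : ℝ} (h1 : a ≤ c) (h2 : c ≤ b) (t : ℝ) :
    Ind a b t = Ind a c t + Ind c b t := by
  rw [Ind, Ind, Ind, ← Set.Ico_union_Ico_eq_Ico h1 h2,
    Set.indicator_union_of_disjoint Set.Ico_disjoint_Ico_same]

lemma Ind_telescope (a d : ℝ) (hd : 0 ≤ d) (M : ℕ) (t : ℝ) :
    ∑ m ∈ Finset.range M, Ind (a + m * d) (a + (m + 1) * d) t = Ind a (a + M * d) t := by
  induction M with
  | zero => simp [Ind]
  | succ M ih =>
      rw [Finset.sum_range_succ, ih,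
        ← Ind_split (by nlinarith [Nat.cast_nonneg (α := ℝ) M] : a ≤ a + (M:ℝ) * d)
          (by nlinarith : a + (M:ℝ) * d ≤ a + (((M:ℕ):ℝ)+1) * d)]
      push_cast
      ring_nf

lemma Ind_div (a b t c : ℝ) (hc : 0 < c) :
    Ind a b (t / c) = Ind (c * a) (c * b) t := by
  simp only [Ind, Set.indicator_apply, Set.mem_Ico, le_div_iff₀ hc, div_lt_iff₀ hc]
  refine if_congr ?_ rfl rfl
  constructor <;> intro h <;> exact ⟨by nlinarith [h.1], by nlinarith [h.2]⟩

lemma Ind_sub (a b t c : ℝ) : Ind a b (t - c) = Ind (a + c) (b + c) t := by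
  simp only [Ind, Set.indicator_apply, Set.mem_Ico]
  refine if_congr ?_ rfl rfl
  constructor <;> intro h <;> exact ⟨by linarith [h.1], by linarith [h.2]⟩

lemma haarScaling_eq_sum (N : ℕ) (hN : 1 ≤ N) (s : ℝ) :
    haarScaling N s = ∑ k ∈ Finset.range N, Ind ((2 * k : ℝ) / N) ((2 * k + 1 : ℝ) / N) s := by
  have hN0 : (0:ℝ) < N := by exact_mod_cast hN
  by_cases h : s ∈ haarSet N
  · rw [haarScaling, Set.indicator_of_mem h]
    have h' := h
    simp only [haarSet, Set.mem_iUnion, Finset.mem_range, Set.mem_Ico] at h'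
    obtain ⟨j, hj, hj1, hj2⟩ := h'
    rw [Finset.sum_eq_single j]
    · rw [Ind, Set.indicator_of_mem (Set.mem_Ico.mpr ⟨hj1, hj2⟩)]
    · intro k hk hkj
      rw [Ind, Set.indicator_of_notMem]
      rw [Set.mem_Ico]
      rintro ⟨hk1, hk2⟩
      rw [div_le_iff₀ hN0] at hj1 hk1
      rw [lt_div_iff₀ hN0] at hj2 hk2
      have e1 : (k:ℝ) < j + 1 := by linarith
      have e2 : (j:ℝ) < k + 1 := by linarith
      have f1 : k < j + 1 := by exact_mod_cast e1
      have f2 : j < k + 1 := by exact_mod_cast e2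
      omega
    · intro hj'; exact absurd (Finset.mem_range.mpr hj) hj'
  · rw [haarScaling, Set.indicator_of_notMem h]
    symm
    apply Finset.sum_eq_zero
    intro k hk
    rw [Ind, Set.indicator_of_notMem]
    intro hs
    exact h (Set.mem_biUnion hk hs)

lemma haar_key (N : ℕ) (hN : 1 ≤ N) (t : ℝ) :
    haarScaling N (t / (2 * N))
      = ∑ j ∈ Finset.range N,
          (haarScaling N (t - 4 * j) + haarScaling N (t - 1 / N - 4 * j)) := by
  have hN0 : (0:ℝ) < N := by exact_mod_cast hN
  have h2N : (0:ℝ) < 2 * N := by linarith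
  rw [haarScaling_eq_sum N hN]
  refine Finset.sum_congr rfl fun j _ => ?_
  rw [Ind_div _ _ _ _ h2N,
    Ind_congr t (show 2*(N:ℝ) * ((2*j:ℝ)/N) = 4*j by field_simp; ring)
      (show 2*(N:ℝ) * ((2*j+1:ℝ)/N) = 4*j + 2 by field_simp; ring)]
  rw [haarScaling_eq_sum N hN (t - 4 * j), show t - 1/(N:ℝ) - 4*j = t - (1/N + 4*j) by ring,
    haarScaling_eq_sum N hN (t - (1/N + 4*j)), ← Finset.sum_add_distrib]
  have step : ∀ k : ℕ,
      Ind ((2*k:ℝ)/N) ((2*k+1:ℝ)/N) (t - 4*j) + Ind ((2*k:ℝ)/N) ((2*k+1:ℝ)/N) (t - (1/N + 4*j))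
        = Ind (4*j + k*(2/(N:ℝ))) (4*j + (k+1)*(2/(N:ℝ))) t := by
    intro k
    rw [Ind_sub, Ind_sub,
      Ind_congr t (show (2*k:ℝ)/N + (1/N + 4*j) = (2*k+1:ℝ)/N + 4*j by field_simp; ring)
        (show (2*k+1:ℝ)/N + (1/N + 4*j) = 4*j + ((k:ℝ)+1)*(2/N) by field_simp; ring),
      Ind_congr t (show (2*k:ℝ)/N + 4*j = 4*j + (k:ℝ)*(2/N) by field_simp; ring) rfl]
    have e1 : (2*k+1:ℝ)/N + 4*j - (4*j + (k:ℝ)*(2/N)) = 1/N := by field_simp; ring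
    have e2 : (4*j + ((k:ℝ)+1)*(2/N)) - ((2*k+1:ℝ)/N + 4*j) = 1/N := by field_simp; ring
    have e3 : (0:ℝ) < 1/N := by positivity
    rw [← Ind_split (by linarith) (by linarith)]
  simp_rw [step]
  rw [Ind_telescope _ _ (by positivity) N t]
  exact Ind_congr t rfl (by field_simp)

lemma haar_integrable (N : ℕ) (hN : 1 ≤ N) : Integrable (haarScaling N) := by
  have hN0 : (0:ℝ) < N := by exact_mod_cast hN
  have hmeas : MeasurableSet (haarSet N) :=
    MeasurableSet.iUnion fun j => MeasurableSet.iUnion fun _ => measurableSet_Ico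
  rw [haarScaling, integrable_indicator_iff hmeas]
  refine integrableOn_const (ne_of_lt ?_)
  have hsub : haarSet N ⊆ Set.Ico (0:ℝ) 2 := by
    intro x hx
    simp only [haarSet, Set.mem_iUnion, Finset.mem_range, Set.mem_Ico] at hx
    obtain ⟨j, hj, h1, h2⟩ := hx
    have hj' : (j:ℝ) + 1 ≤ N := by exact_mod_cast hj
    constructor
    · exact le_trans (by positivity) h1
    · refine lt_of_lt_of_le h2 ?_
      rw [div_le_iff₀ hN0]
      linarith
  calc volume (haarSet N) ≤ volume (Set.Ico (0:ℝ) 2) := measure_mono hsub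
    _ < ⊤ := by rw [Real.volume_Ico]; exact ENNReal.ofReal_lt_top

lemma fourier_repr (f : ℝ → ℂ) (ξ : ℝ) :
    FourierTransform.fourier f ξ = ∫ v : ℝ, Complex.exp (↑(-2 * π * v * ξ) * I) * f v := by
  rw [Real.fourier_real_eq_integral_exp_smul]
  simp [smul_eq_mul]

lemma integrand_integrable {f : ℝ → ℂ} (hf : Integrable f) (ξ : ℝ) :
    Integrable (fun v : ℝ => Complex.exp (↑(-2 * π * v * ξ) * I) * f v) := by
  refine hf.bdd_mul (c := 1) ?_ (Filter.Eventually.of_forall fun x => ?_)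
  · exact (Complex.continuous_exp.comp (by continuity)).aestronglyMeasurable
  · rw [Complex.norm_exp_ofReal_mul_I]

lemma fourier_translate {f : ℝ → ℂ} (hf : Integrable f) (c ξ : ℝ) :
    FourierTransform.fourier (fun t => f (t - c)) ξ
      = Complex.exp (↑(-2 * π * c * ξ) * I) * FourierTransform.fourier f ξ := by
  rw [fourier_repr, fourier_repr, ← integral_const_mul,
    ← integral_add_right_eq_self (fun t => Complex.exp (↑(-2*π*t*ξ) * I) * f (t - c)) c]
  congr 1
  ext x
  simp only [add_sub_cancel_right]
  rw [← mul_assoc, ← Complex.exp_add]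
  congr 2
  push_cast
  ring

/-- The refinement equation of the nonuniform Haar scaling function, in the time
domain (a.e.) and equivalently in the Fourier domain. -/
theorem haarScaling_refinement (N : ℕ) (hN : 1 ≤ N) :
    (∀ᵐ t : ℝ, haarScaling N (t / (2 * N))
        = ∑ j ∈ Finset.range N,
            (haarScaling N (t - 4 * j) + haarScaling N (t - 1 / N - 4 * j))) ∧
    (∀ ξ : ℝ, FourierTransform.fourier (haarScaling N) (2 * N * ξ)
        = (1 / (2 * N : ℂ)) * (1 + Complex.exp (-2 * π * I * ξ / N)) *
            (∑ j ∈ Finset.range N, Complex.exp (-8 * π * I * j * ξ)) *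
            FourierTransform.fourier (haarScaling N) ξ) := by
  have hN0 : (0:ℝ) < N := by exact_mod_cast hN
  have h2N : (0:ℝ) < 2 * N := by linarith
  have hf := haar_integrable N hN
  refine ⟨Filter.Eventually.of_forall (haar_key N hN), fun ξ => ?_⟩
  set F := FourierTransform.fourier (haarScaling N) ξ with hF
  set g : ℝ → ℂ := fun u => Complex.exp (↑(-2 * π * u * ξ) * I) * haarScaling N (u / (2*N))
    with hg
  have key1 : ∀ x : ℝ, Complex.exp (↑(-2 * π * x * (2*(N:ℝ)*ξ)) * I) * haarScaling N x
      = g (2*(N:ℝ)*x) := by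
    intro x
    rw [hg]
    simp only
    rw [mul_div_cancel_left₀ _ (ne_of_gt h2N)]
    congr 2
    push_cast
    ring
  have step1 : FourierTransform.fourier (haarScaling N) (2 * N * ξ)
      = (2*(N:ℝ))⁻¹ • ∫ s : ℝ, g s := by
    rw [fourier_repr]
    simp_rw [key1]
    rw [MeasureTheory.Measure.integral_comp_mul_left g (2*N)]
    congr 1
    rw [abs_of_pos (by positivity)]
  have step2 : ∀ s : ℝ, g s = ∑ j ∈ Finset.range N,
      (Complex.exp (↑(-2 * π * s * ξ) * I) * haarScaling N (s - 4*j)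
        + Complex.exp (↑(-2 * π * s * ξ) * I) * haarScaling N (s - 1/N - 4*j)) := by
    intro s
    rw [hg]
    simp only
    rw [haar_key N hN s, Finset.mul_sum]
    exact Finset.sum_congr rfl fun j _ => mul_add _ _ _
  have int_tr : ∀ c : ℝ, Integrable (fun s : ℝ =>
      Complex.exp (↑(-2 * π * s * ξ) * I) * haarScaling N (s - c)) := by
    intro c
    exact integrand_integrable (hf.comp_sub_right c) ξ
  have step3 : (∫ s : ℝ, g s) = ∑ j ∈ Finset.range N,
      ((∫ s : ℝ, Complex.exp (↑(-2 * π * s * ξ) * I) * haarScaling N (s - 4*j))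
        + ∫ s : ℝ, Complex.exp (↑(-2 * π * s * ξ) * I) * haarScaling N (s - 1/N - 4*j)) := by
    have hint : ∀ j ∈ Finset.range N, Integrable (fun s : ℝ =>
        Complex.exp (↑(-2 * π * s * ξ) * I) * haarScaling N (s - 4*j)
          + Complex.exp (↑(-2 * π * s * ξ) * I) * haarScaling N (s - 1/N - 4*j)) :=
      fun j _ => (int_tr (4*j)).add (by simpa only [sub_sub] using int_tr (1/(N:ℝ) + 4*j))
    simp_rw [step2]
    rw [integral_finset_sum _ hint]
    exact Finset.sum_congr rfl fun j _ => integral_add (int_tr (4*j))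
      (by simpa only [sub_sub] using int_tr (1/(N:ℝ) + 4*j))
  have tr_val : ∀ c : ℝ, (∫ s : ℝ, Complex.exp (↑(-2 * π * s * ξ) * I) * haarScaling N (s - c))
      = Complex.exp (↑(-2 * π * c * ξ) * I) * F := by
    intro c
    rw [hF, ← fourier_translate hf c ξ, fourier_repr]
  rw [step1, step3]
  have term : ∀ j : ℕ,
      ((∫ s : ℝ, Complex.exp (↑(-2 * π * s * ξ) * I) * haarScaling N (s - 4*j))
        + ∫ s : ℝ, Complex.exp (↑(-2 * π * s * ξ) * I) * haarScaling N (s - 1/N - 4*j))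
      = (1 + Complex.exp (-2 * π * I * ξ / N)) * Complex.exp (-8 * π * I * j * ξ) * F := by
    intro j
    have h2 : (∫ s : ℝ, Complex.exp (↑(-2 * π * s * ξ) * I) * haarScaling N (s - 1/N - 4*j))
        = Complex.exp (↑(-2 * π * (1/(N:ℝ) + 4*j) * ξ) * I) * F := by
      rw [← tr_val (1/(N:ℝ) + 4*j)]
      simp_rw [sub_sub]
    rw [tr_val (4*j), h2]
    have A : Complex.exp (↑(-2 * π * (4*(j:ℝ)) * ξ) * I) = Complex.exp (-8 * π * I * j * ξ) := by
      congr 1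
      push_cast
      ring
    have B : Complex.exp (↑(-2 * π * (1/(N:ℝ) + 4*j) * ξ) * I)
        = Complex.exp (-2 * π * I * ξ / N) * Complex.exp (-8 * π * I * j * ξ) := by
      rw [← Complex.exp_add]
      congr 1
      push_cast
      ring
    rw [A, B]
    ring
  simp_rw [term]
  rw [← Finset.sum_mul, ← Finset.mul_sum]
  rw [Complex.real_smul]
  push_cast
  ring

end
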